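/- Let f: {0,1,2}^3 → {0,1,2} be a rule conserving the number of 1's (weight Ψ_1, indicator of state 1) whose restriction to binary arguments is compatible with elementary CA 184 (i.e., for x_1,x_2,x_3 ∈ {0,1}, f(x_1,x_2,x_3) = 1 if f_184(x_1,x_2,x_3) = 1, and f(x_1,x_2,x_3) ∈ {0,2} otherwise). Then the number of such rules f is exactly 2^19. -/

import Mathlib

instance (n : ℕ) : NeZero (n + 3) := ⟨by omega⟩

abbrev Rule3 := Fin 3 → Fin 3 → Fin 3 → Fin 3
abbrev Rule2 := Fin 2 → Fin 2 → Fin 2 → Fin 2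

/-- Global map of a ternary nearest-neighbour CA on cyclic configurations. -/
def glob3 {n : ℕ} (f : Rule3) (x : ZMod n → Fin 3) : ZMod n → Fin 3 :=
  fun i => f (x (i - 1)) (x i) (x (i + 1))

/-- Global map of a binary (elementary) CA on cyclic configurations. -/
def glob2 {n : ℕ} (g : Rule2) (x : ZMod n → Fin 2) : ZMod n → Fin 2 :=
  fun i => g (x (i - 1)) (x i) (x (i + 1))

/-- `f` conserves the additive quantity with weight `Ψ` on all cyclic
configurations of all lengths `L ≥ 3`. -/
def conserves3 (f : Rule3) (Ψ : Fin 3 → ℤ) : Prop :=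
  ∀ L : ℕ, ∀ x : ZMod (L + 3) → Fin 3,
    (∑ i, Ψ (glob3 f x i)) = ∑ i, Ψ (x i)

def Ψ0 : Fin 3 → ℤ := fun x => (1 - (x.val : ℤ)) * (2 - (x.val : ℤ)) / 2
def Ψ1 : Fin 3 → ℤ := fun x => (x.val : ℤ) * (2 - (x.val : ℤ))
def Ψ2 : Fin 3 → ℤ := fun x => (x.val : ℤ) * ((x.val : ℤ) - 1) / 2
def Ψs : Fin 3 → ℤ := fun x => (x.val : ℤ)

/-- `f` conserves the number of 0's, of 1's and of 2's. -/
def allConserving3 (f : Rule3) : Prop :=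
  conserves3 f Ψ0 ∧ conserves3 f Ψ1 ∧ conserves3 f Ψ2

/-- A binary rule is number-conserving. -/
def numConserving2 (g : Rule2) : Prop :=
  ∀ L : ℕ, ∀ x : ZMod (L + 3) → Fin 2,
    (∑ i, (glob2 g x i).val) = ∑ i, (x i).val

/-- The elementary CA rule with Wolfram number `w`. -/
def ecaRule (w : ℕ) : Rule2 :=
  fun a b c => ⟨w / 2 ^ (4 * a.val + 2 * b.val + c.val) % 2, Nat.mod_lt _ (by norm_num)⟩

/-- Wolfram number of a binary rule. -/
def wolfram2 (g : Rule2) : ℕ :=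
  ∑ a : Fin 2, ∑ b : Fin 2, ∑ c : Fin 2,
    (g a b c).val * 2 ^ (4 * a.val + 2 * b.val + c.val)

/-- Embedding of `{0,1}` into `{0,1,2}` as `{0,1}`. -/
def i01 : Fin 2 → Fin 3 := Fin.castLE (by norm_num)
/-- Embedding of `{0,1}` into `{0,1,2}` as `{0,2}`. -/
def i02 : Fin 2 → Fin 3 := fun a => ⟨2 * a.val, by have := a.isLt; omega⟩
/-- Embedding of `{0,1}` into `{0,1,2}` as `{1,2}`. -/
def i12 : Fin 2 → Fin 3 := fun a => ⟨a.val + 1, by have := a.isLt; omega⟩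

/-- The binary projection `f|_{01}` of `f` exists and equals the binary rule `h`. -/
def agrees01 (f : Rule3) (h : Rule2) : Prop :=
  ∀ a b c : Fin 2, f (i01 a) (i01 b) (i01 c) = i01 (h a b c)

/-- The binary projection `f|_{02}` of `f` exists and equals the binary rule `h`. -/
def agrees02 (f : Rule3) (h : Rule2) : Prop :=
  ∀ a b c : Fin 2, f (i02 a) (i02 b) (i02 c) = i02 (h a b c)

/-- The binary projection `f|_{12}` of `f` exists and equals the binary rule `h`. -/
def agrees12 (f : Rule3) (h : Rule2) : Prop :=
  ∀ a b c : Fin 2, f (i12 a) (i12 b) (i12 c) = i12 (h a b c)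

/-- `f` is reducible to two states: all three binary projections exist. -/
def reducible3 (f : Rule3) : Prop :=
  (∃ h, agrees01 f h) ∧ (∃ h, agrees02 f h) ∧ (∃ h, agrees12 f h)

/-- Number of occurrences of symbol `k` in the cyclic configuration `x`. -/
def count3 {n : ℕ} [NeZero n] (x : ZMod n → Fin 3) (k : Fin 3) : ℕ :=
  (Finset.univ.filter fun i => x i = k).card

/-- `f` is compatible with elementary rule 184 on binary arguments. -/
def compat184 (f : Rule3) : Prop :=
  ∀ a b c : Fin 2,
    (ecaRule 184 a b c = 1 → f (i01 a) (i01 b) (i01 c) = 1) ∧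
    (ecaRule 184 a b c = 0 →
      f (i01 a) (i01 b) (i01 c) = 0 ∨ f (i01 a) (i01 b) (i01 c) = 2)

/-! ### Auxiliary machinery -/

/-- Indicator table of the first admissible rule family. -/
def T1tab : Fin 3 → Fin 3 → Fin 3 → Bool := fun a b c => (b == 1 && c == 1) || (a == 1 && !(b == 1))

/-- Indicator table of the second admissible rule family. -/
def T2tab : Fin 3 → Fin 3 → Fin 3 → Bool := fun a b c => (b == 1 && !(c == 0)) || (a == 1 && b == 0)

/-- `f` has indicator pattern `T`. -/
def patP (T : Fin 3 → Fin 3 → Fin 3 → Bool) (f : Rule3) : Prop :=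
  ∀ a b c : Fin 3, (f a b c = 1 ↔ T a b c = true)

instance (T : Fin 3 → Fin 3 → Fin 3 → Bool) : DecidablePred (patP T) := fun _ =>
  Fintype.decidableForallFintype

lemma psi01 : ∀ v : Fin 3, Ψ1 v = 0 ∨ Ψ1 v = 1 := by decide

lemma iff_of_psi : ∀ (v : Fin 3) (t : Bool),
    Ψ1 v = (if t = true then 1 else 0) → (v = 1 ↔ t = true) := by decide

lemma psi_of_iff : ∀ (v : Fin 3) (t : Bool),
    (v = 1 ↔ t = true) → Ψ1 v = (if t = true then 1 else 0) := by decide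

lemma ne1_cases : ∀ v : Fin 3, v ≠ 1 → v = 0 ∨ v = 2 := by decide

lemma sum5 (g : ZMod 5 → ℤ) : ∑ i, g i = g 0 + g 1 + g 2 + g 3 + g 4 := by
  show ∑ i : Fin 5, g i = _
  exact Fin.sum_univ_five g

lemma Seq5 (f : Rule3) (h : conserves3 f Ψ1) (a b c : Fin 3) :
    Ψ1 (f 0 0 a) + Ψ1 (f 0 a b) + Ψ1 (f a b c) + Ψ1 (f b c 0) + Ψ1 (f c 0 0)
      = Ψ1 a + Ψ1 b + Ψ1 c := by
  set x : ZMod 5 → Fin 3 :=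
    fun i => if i = 0 then a else if i = 1 then b else if i = 2 then c else 0 with hx
  have h5 := h 2 x
  rw [sum5, sum5] at h5
  have e0 : x 0 = a := by
    show (if (0:ZMod 5) = 0 then a else if (0:ZMod 5) = 1 then b else if (0:ZMod 5) = 2 then c else 0) = a
    rw [if_pos rfl]
  have e1 : x 1 = b := by
    show (if (1:ZMod 5) = 0 then a else if (1:ZMod 5) = 1 then b else if (1:ZMod 5) = 2 then c else 0) = b
    rw [if_neg (by decide), if_pos rfl]
  have e2 : x 2 = c := by
    show (if (2:ZMod 5) = 0 then a else if (2:ZMod 5) = 1 then b else if (2:ZMod 5) = 2 then c else 0) = c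
    rw [if_neg (by decide), if_neg (by decide), if_pos rfl]
  have e3 : x 3 = 0 := by
    show (if (3:ZMod 5) = 0 then a else if (3:ZMod 5) = 1 then b else if (3:ZMod 5) = 2 then c else 0) = 0
    rw [if_neg (by decide), if_neg (by decide), if_neg (by decide)]
  have e4 : x 4 = 0 := by
    show (if (4:ZMod 5) = 0 then a else if (4:ZMod 5) = 1 then b else if (4:ZMod 5) = 2 then c else 0) = 0
    rw [if_neg (by decide), if_neg (by decide), if_neg (by decide)]
  simp only [glob3] at h5
  rw [show (0 - 1 : ZMod 5) = 4 from by decide, show (0 + 1 : ZMod 5) = 1 from by decide,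
      show (1 - 1 : ZMod 5) = 0 from by decide, show (1 + 1 : ZMod 5) = 2 from by decide,
      show (2 - 1 : ZMod 5) = 1 from by decide, show (2 + 1 : ZMod 5) = 3 from by decide,
      show (3 - 1 : ZMod 5) = 2 from by decide, show (3 + 1 : ZMod 5) = 4 from by decide,
      show (4 - 1 : ZMod 5) = 3 from by decide, show (4 + 1 : ZMod 5) = 0 from by decide,
      e0, e1, e2, e3, e4] at h5
  have hp0 : Ψ1 0 = 0 := by decide
  linarith [h5]

/-- current for a table -/
def gT (T : Fin 3 → Fin 3 → Fin 3 → Bool) (u v : Fin 3) : ℤ :=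
  (if T 0 0 u = true then 1 else 0) + (if T 0 u v = true then 1 else 0)

lemma conserve_of_current (f : Rule3) (g : Fin 3 → Fin 3 → ℤ)
    (hcur : ∀ a b c : Fin 3, Ψ1 (f a b c) = Ψ1 a + g b c - g a b) :
    conserves3 f Ψ1 := by
  intro L x
  have step : ∀ i : ZMod (L+3),
      Ψ1 (glob3 f x i) = Ψ1 (x (i-1)) + g (x i) (x (i+1)) - g (x (i-1)) (x i) :=
    fun i => hcur _ _ _
  have s1 : ∑ i : ZMod (L+3), Ψ1 (x (i-1)) = ∑ i : ZMod (L+3), Ψ1 (x i) :=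
    Fintype.sum_equiv (Equiv.subRight (1 : ZMod (L+3))) _ _ (fun i => rfl)
  have s2 : ∑ i : ZMod (L+3), g (x (i-1)) (x i) = ∑ i : ZMod (L+3), g (x i) (x (i+1)) :=
    Fintype.sum_equiv (Equiv.subRight (1 : ZMod (L+3))) _ _
      (fun i => by simp)
  calc ∑ i, Ψ1 (glob3 f x i)
      = ∑ i : ZMod (L+3), (Ψ1 (x (i-1)) + g (x i) (x (i+1)) - g (x (i-1)) (x i)) :=
        Finset.sum_congr rfl (fun i _ => step i)
    _ = (∑ i : ZMod (L+3), Ψ1 (x (i-1))) + (∑ i : ZMod (L+3), g (x i) (x (i+1)))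
          - ∑ i : ZMod (L+3), g (x (i-1)) (x i) := by
        rw [Finset.sum_sub_distrib, Finset.sum_add_distrib]
    _ = ∑ i, Ψ1 (x i) := by rw [s1, s2]; ring

lemma tab_identity1 : ∀ a b c : Fin 3,
    (if T1tab a b c = true then (1:ℤ) else 0) = Ψ1 a + gT T1tab b c - gT T1tab a b := by
  decide

lemma tab_identity2 : ∀ a b c : Fin 3,
    (if T2tab a b c = true then (1:ℤ) else 0) = Ψ1 a + gT T2tab b c - gT T2tab a b := by
  decide

lemma back1 (f : Rule3) (hP : patP T1tab f) : conserves3 f Ψ1 ∧ compat184 f := by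
  constructor
  · refine conserve_of_current f (gT T1tab) (fun a b c => ?_)
    rw [psi_of_iff _ _ (hP a b c)]
    exact tab_identity1 a b c
  · intro a b c
    fin_cases a <;> fin_cases b <;> fin_cases c <;>
      refine ⟨fun h => ?_, fun h => ?_⟩ <;>
      first
        | exact absurd h (by decide)
        | exact (hP _ _ _).mpr (by decide)
        | exact ne1_cases _ (fun h' => absurd ((hP _ _ _).mp h') (by decide))

lemma back2 (f : Rule3) (hP : patP T2tab f) : conserves3 f Ψ1 ∧ compat184 f := by
  constructor
  · refine conserve_of_current f (gT T2tab) (fun a b c => ?_)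
    rw [psi_of_iff _ _ (hP a b c)]
    exact tab_identity2 a b c
  · intro a b c
    fin_cases a <;> fin_cases b <;> fin_cases c <;>
      refine ⟨fun h => ?_, fun h => ?_⟩ <;>
      first
        | exact absurd h (by decide)
        | exact (hP _ _ _).mpr (by decide)
        | exact ne1_cases _ (fun h' => absurd ((hP _ _ _).mp h') (by decide))

lemma pin1 (B : Fin 3 → Fin 3 → Fin 3 → ℤ)
    (H000 : B 0 0 0 = 0 + (B 0 0 0 + B 0 0 0) - (B 0 0 0 + B 0 0 0))
    (H001 : B 0 0 1 = 0 + (B 0 0 0 + B 0 0 1) - (B 0 0 0 + B 0 0 0))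
    (H002 : B 0 0 2 = 0 + (B 0 0 0 + B 0 0 2) - (B 0 0 0 + B 0 0 0))
    (H010 : B 0 1 0 = 0 + (B 0 0 1 + B 0 1 0) - (B 0 0 0 + B 0 0 1))
    (H011 : B 0 1 1 = 0 + (B 0 0 1 + B 0 1 1) - (B 0 0 0 + B 0 0 1))
    (H012 : B 0 1 2 = 0 + (B 0 0 1 + B 0 1 2) - (B 0 0 0 + B 0 0 1))
    (H020 : B 0 2 0 = 0 + (B 0 0 2 + B 0 2 0) - (B 0 0 0 + B 0 0 2))
    (H021 : B 0 2 1 = 0 + (B 0 0 2 + B 0 2 1) - (B 0 0 0 + B 0 0 2))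
    (H022 : B 0 2 2 = 0 + (B 0 0 2 + B 0 2 2) - (B 0 0 0 + B 0 0 2))
    (H100 : B 1 0 0 = 1 + (B 0 0 0 + B 0 0 0) - (B 0 0 1 + B 0 1 0))
    (H101 : B 1 0 1 = 1 + (B 0 0 0 + B 0 0 1) - (B 0 0 1 + B 0 1 0))
    (H102 : B 1 0 2 = 1 + (B 0 0 0 + B 0 0 2) - (B 0 0 1 + B 0 1 0))
    (H110 : B 1 1 0 = 1 + (B 0 0 1 + B 0 1 0) - (B 0 0 1 + B 0 1 1))
    (H111 : B 1 1 1 = 1 + (B 0 0 1 + B 0 1 1) - (B 0 0 1 + B 0 1 1))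
    (H112 : B 1 1 2 = 1 + (B 0 0 1 + B 0 1 2) - (B 0 0 1 + B 0 1 1))
    (H120 : B 1 2 0 = 1 + (B 0 0 2 + B 0 2 0) - (B 0 0 1 + B 0 1 2))
    (H121 : B 1 2 1 = 1 + (B 0 0 2 + B 0 2 1) - (B 0 0 1 + B 0 1 2))
    (H122 : B 1 2 2 = 1 + (B 0 0 2 + B 0 2 2) - (B 0 0 1 + B 0 1 2))
    (H200 : B 2 0 0 = 0 + (B 0 0 0 + B 0 0 0) - (B 0 0 2 + B 0 2 0))
    (H201 : B 2 0 1 = 0 + (B 0 0 0 + B 0 0 1) - (B 0 0 2 + B 0 2 0))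
    (H202 : B 2 0 2 = 0 + (B 0 0 0 + B 0 0 2) - (B 0 0 2 + B 0 2 0))
    (H210 : B 2 1 0 = 0 + (B 0 0 1 + B 0 1 0) - (B 0 0 2 + B 0 2 1))
    (H211 : B 2 1 1 = 0 + (B 0 0 1 + B 0 1 1) - (B 0 0 2 + B 0 2 1))
    (H212 : B 2 1 2 = 0 + (B 0 0 1 + B 0 1 2) - (B 0 0 2 + B 0 2 1))
    (H220 : B 2 2 0 = 0 + (B 0 0 2 + B 0 2 0) - (B 0 0 2 + B 0 2 2))
    (H221 : B 2 2 1 = 0 + (B 0 0 2 + B 0 2 1) - (B 0 0 2 + B 0 2 2))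
    (H222 : B 2 2 2 = 0 + (B 0 0 2 + B 0 2 2) - (B 0 0 2 + B 0 2 2))
    (q000 : 0 ≤ B 0 0 0 ∧ B 0 0 0 ≤ 1)
    (q001 : 0 ≤ B 0 0 1 ∧ B 0 0 1 ≤ 1)
    (q002 : 0 ≤ B 0 0 2 ∧ B 0 0 2 ≤ 1)
    (q010 : 0 ≤ B 0 1 0 ∧ B 0 1 0 ≤ 1)
    (q011 : 0 ≤ B 0 1 1 ∧ B 0 1 1 ≤ 1)
    (q012 : 0 ≤ B 0 1 2 ∧ B 0 1 2 ≤ 1)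
    (q020 : 0 ≤ B 0 2 0 ∧ B 0 2 0 ≤ 1)
    (q021 : 0 ≤ B 0 2 1 ∧ B 0 2 1 ≤ 1)
    (q022 : 0 ≤ B 0 2 2 ∧ B 0 2 2 ≤ 1)
    (q100 : 0 ≤ B 1 0 0 ∧ B 1 0 0 ≤ 1)
    (q101 : 0 ≤ B 1 0 1 ∧ B 1 0 1 ≤ 1)
    (q102 : 0 ≤ B 1 0 2 ∧ B 1 0 2 ≤ 1)
    (q110 : 0 ≤ B 1 1 0 ∧ B 1 1 0 ≤ 1)
    (q111 : 0 ≤ B 1 1 1 ∧ B 1 1 1 ≤ 1)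
    (q112 : 0 ≤ B 1 1 2 ∧ B 1 1 2 ≤ 1)
    (q120 : 0 ≤ B 1 2 0 ∧ B 1 2 0 ≤ 1)
    (q121 : 0 ≤ B 1 2 1 ∧ B 1 2 1 ≤ 1)
    (q122 : 0 ≤ B 1 2 2 ∧ B 1 2 2 ≤ 1)
    (q200 : 0 ≤ B 2 0 0 ∧ B 2 0 0 ≤ 1)
    (q201 : 0 ≤ B 2 0 1 ∧ B 2 0 1 ≤ 1)
    (q202 : 0 ≤ B 2 0 2 ∧ B 2 0 2 ≤ 1)
    (q210 : 0 ≤ B 2 1 0 ∧ B 2 1 0 ≤ 1)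
    (q211 : 0 ≤ B 2 1 1 ∧ B 2 1 1 ≤ 1)
    (q212 : 0 ≤ B 2 1 2 ∧ B 2 1 2 ≤ 1)
    (q220 : 0 ≤ B 2 2 0 ∧ B 2 2 0 ≤ 1)
    (q221 : 0 ≤ B 2 2 1 ∧ B 2 2 1 ≤ 1)
    (q222 : 0 ≤ B 2 2 2 ∧ B 2 2 2 ≤ 1)
    (hq000 : B 0 0 0 = 0)
    (hq001 : B 0 0 1 = 0)
    (hq010 : B 0 1 0 = 0)
    (hq011 : B 0 1 1 = 1)
    (hq100 : B 1 0 0 = 1)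
    (hq101 : B 1 0 1 = 1)
    (hq110 : B 1 1 0 = 0)
    (hq111 : B 1 1 1 = 1)
    (hu : B 0 1 2 = 0) :
    B 0 0 0 = 0 ∧ B 0 0 1 = 0 ∧ B 0 0 2 = 0 ∧ B 0 1 0 = 0 ∧ B 0 1 1 = 1 ∧ B 0 1 2 = 0 ∧ B 0 2 0 = 0 ∧ B 0 2 1 = 0 ∧ B 0 2 2 = 0 ∧ B 1 0 0 = 1 ∧ B 1 0 1 = 1 ∧ B 1 0 2 = 1 ∧ B 1 1 0 = 0 ∧ B 1 1 1 = 1 ∧ B 1 1 2 = 0 ∧ B 1 2 0 = 1 ∧ B 1 2 1 = 1 ∧ B 1 2 2 = 1 ∧ B 2 0 0 = 0 ∧ B 2 0 1 = 0 ∧ B 2 0 2 = 0 ∧ B 2 1 0 = 0 ∧ B 2 1 1 = 1 ∧ B 2 1 2 = 0 ∧ B 2 2 0 = 0 ∧ B 2 2 1 = 0 ∧ B 2 2 2 = 0 := by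
  have vtmp : B 1 0 2 = 1 ∧ B 0 0 2 = 0 := by clear H000 H001 H002 H010 H011 H012 H020 H021 H022 H100 H101 H110 H111 H112 H120 H121 H122 H200 H201 H202 H210 H211 H212 H220 H221 H222 q000 q001 q010 q011 q012 q020 q021 q022 q100 q101 q110 q111 q112 q120 q121 q122 q200 q201 q202 q210 q211 q212 q220 q221 q222 hq011 hq100 hq101 hq110 hq111 hu; omega
  obtain ⟨v102, v002⟩ := vtmp
  have v112 : B 1 1 2 = 0 := by clear H000 H001 H002 H010 H011 H012 H020 H021 H022 H100 H101 H102 H110 H111 H120 H121 H122 H200 H201 H202 H210 H211 H212 H220 H221 H222 q000 q001 q002 q010 q011 q012 q020 q021 q022 q100 q101 q102 q110 q111 q120 q121 q122 q200 q201 q202 q210 q211 q212 q220 q221 q222 hq000 hq010 hq100 hq101 hq110 hq111 v102 v002; omega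
  have vtmp : B 1 2 0 = 1 ∧ B 0 2 0 = 0 := by clear H000 H001 H002 H010 H011 H012 H020 H021 H022 H100 H101 H102 H110 H111 H112 H121 H122 H200 H201 H202 H210 H211 H212 H220 H221 H222 q000 q001 q002 q010 q011 q012 q021 q022 q100 q101 q102 q110 q111 q112 q121 q122 q200 q201 q202 q210 q211 q212 q220 q221 q222 hq000 hq010 hq011 hq100 hq101 hq110 hq111 v102 v112; omega
  obtain ⟨v120, v020⟩ := vtmp
  have vtmp : B 1 2 1 = 1 ∧ B 0 2 1 = 0 := by clear H000 H001 H002 H010 H011 H012 H020 H021 H022 H100 H101 H102 H110 H111 H112 H120 H122 H200 H201 H202 H210 H211 H212 H220 H221 H222 q000 q001 q002 q010 q011 q012 q020 q022 q100 q101 q102 q110 q111 q112 q120 q122 q200 q201 q202 q210 q211 q212 q220 q221 q222 hq000 hq010 hq011 hq100 hq101 hq110 hq111 v102 v112 v120 v020; omega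
  obtain ⟨v121, v021⟩ := vtmp
  have vtmp : B 1 2 2 = 1 ∧ B 0 2 2 = 0 := by clear H000 H001 H002 H010 H011 H012 H020 H021 H022 H100 H101 H102 H110 H111 H112 H120 H121 H200 H201 H202 H210 H211 H212 H220 H221 H222 q000 q001 q002 q010 q011 q012 q020 q021 q100 q101 q102 q110 q111 q112 q120 q121 q200 q201 q202 q210 q211 q212 q220 q221 q222 hq000 hq010 hq011 hq100 hq101 hq110 hq111 v102 v112 v120 v020 v121 v021; omega
  obtain ⟨v122, v022⟩ := vtmp
  have v200 : B 2 0 0 = 0 := by clear H000 H001 H002 H010 H011 H012 H020 H021 H022 H100 H101 H102 H110 H111 H112 H120 H121 H122 H201 H202 H210 H211 H212 H220 H221 H222 q000 q001 q002 q010 q011 q012 q020 q021 q022 q100 q101 q102 q110 q111 q112 q120 q121 q122 q201 q202 q210 q211 q212 q220 q221 q222 hq001 hq010 hq011 hq100 hq101 hq110 hq111 hu v102 v112 v120 v121 v021 v122 v022; omega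
  have v201 : B 2 0 1 = 0 := by clear H000 H001 H002 H010 H011 H012 H020 H021 H022 H100 H101 H102 H110 H111 H112 H120 H121 H122 H200 H202 H210 H211 H212 H220 H221 H222 q000 q001 q002 q010 q011 q012 q020 q021 q022 q100 q101 q102 q110 q111 q112 q120 q121 q122 q200 q202 q210 q211 q212 q220 q221 q222 hq010 hq011 hq100 hq101 hq110 hq111 hu v102 v112 v120 v121 v021 v122 v022 v200; omega
  have v202 : B 2 0 2 = 0 := by clear H000 H001 H002 H010 H011 H012 H020 H021 H022 H100 H101 H102 H110 H111 H112 H120 H121 H122 H200 H201 H210 H211 H212 H220 H221 H222 q000 q001 q002 q010 q011 q012 q020 q021 q022 q100 q101 q102 q110 q111 q112 q120 q121 q122 q200 q201 q210 q211 q212 q220 q221 q222 hq001 hq010 hq011 hq100 hq101 hq110 hq111 hu v102 v112 v120 v121 v021 v122 v022 v200 v201; omega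
  have v210 : B 2 1 0 = 0 := by clear H000 H001 H002 H010 H011 H012 H020 H021 H022 H100 H101 H102 H110 H111 H112 H120 H121 H122 H200 H201 H202 H211 H212 H220 H221 H222 q000 q001 q002 q010 q011 q012 q020 q021 q022 q100 q101 q102 q110 q111 q112 q120 q121 q122 q200 q201 q202 q211 q212 q220 q221 q222 hq000 hq011 hq100 hq101 hq110 hq111 hu v102 v112 v120 v020 v121 v122 v022 v200 v201 v202; omega
  have v211 : B 2 1 1 = 1 := by clear H000 H001 H002 H010 H011 H012 H020 H021 H022 H100 H101 H102 H110 H111 H112 H120 H121 H122 H200 H201 H202 H210 H212 H220 H221 H222 q000 q001 q002 q010 q011 q012 q020 q021 q022 q100 q101 q102 q110 q111 q112 q120 q121 q122 q200 q201 q202 q210 q212 q220 q221 q222 hq000 hq010 hq100 hq101 hq110 hq111 hu v102 v112 v120 v020 v121 v122 v022 v200 v201 v202 v210; omega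
  have v212 : B 2 1 2 = 0 := by clear H000 H001 H002 H010 H011 H012 H020 H021 H022 H100 H101 H102 H110 H111 H112 H120 H121 H122 H200 H201 H202 H210 H211 H220 H221 H222 q000 q001 q002 q010 q011 q012 q020 q021 q022 q100 q101 q102 q110 q111 q112 q120 q121 q122 q200 q201 q202 q210 q211 q220 q221 q222 hq000 hq010 hq011 hq100 hq101 hq110 hq111 v102 v112 v120 v020 v121 v122 v022 v200 v201 v202 v210 v211; omega
  have v220 : B 2 2 0 = 0 := by clear H000 H001 H002 H010 H011 H012 H020 H021 H022 H100 H101 H102 H110 H111 H112 H120 H121 H122 H200 H201 H202 H210 H211 H212 H221 H222 q000 q001 q002 q010 q011 q012 q020 q021 q022 q100 q101 q102 q110 q111 q112 q120 q121 q122 q200 q201 q202 q210 q211 q212 q221 q222 hq000 hq001 hq010 hq011 hq100 hq101 hq110 hq111 hu v102 v112 v120 v121 v021 v122 v200 v201 v202 v210 v211 v212; omega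
  have v221 : B 2 2 1 = 0 := by clear H000 H001 H002 H010 H011 H012 H020 H021 H022 H100 H101 H102 H110 H111 H112 H120 H121 H122 H200 H201 H202 H210 H211 H212 H220 H222 q000 q001 q002 q010 q011 q012 q020 q021 q022 q100 q101 q102 q110 q111 q112 q120 q121 q122 q200 q201 q202 q210 q211 q212 q220 q222 hq000 hq001 hq010 hq011 hq100 hq101 hq110 hq111 hu v102 v112 v120 v020 v121 v122 v200 v201 v202 v210 v211 v212 v220; omega
  have v222 : B 2 2 2 = 0 := by clear H000 H001 H002 H010 H011 H012 H020 H021 H022 H100 H101 H102 H110 H111 H112 H120 H121 H122 H200 H201 H202 H210 H211 H212 H220 H221 q000 q001 q002 q010 q011 q012 q020 q021 q022 q100 q101 q102 q110 q111 q112 q120 q121 q122 q200 q201 q202 q210 q211 q212 q220 q221 hq000 hq001 hq010 hq011 hq100 hq101 hq110 hq111 hu v102 v112 v120 v020 v121 v021 v122 v200 v201 v202 v210 v211 v212 v220 v221; omega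
  exact ⟨hq000, hq001, v002, hq010, hq011, hu, v020, v021, v022, hq100, hq101, v102, hq110, hq111, v112, v120, v121, v122, v200, v201, v202, v210, v211, v212, v220, v221, v222⟩

lemma pin2 (B : Fin 3 → Fin 3 → Fin 3 → ℤ)
    (H000 : B 0 0 0 = 0 + (B 0 0 0 + B 0 0 0) - (B 0 0 0 + B 0 0 0))
    (H001 : B 0 0 1 = 0 + (B 0 0 0 + B 0 0 1) - (B 0 0 0 + B 0 0 0))
    (H002 : B 0 0 2 = 0 + (B 0 0 0 + B 0 0 2) - (B 0 0 0 + B 0 0 0))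
    (H010 : B 0 1 0 = 0 + (B 0 0 1 + B 0 1 0) - (B 0 0 0 + B 0 0 1))
    (H011 : B 0 1 1 = 0 + (B 0 0 1 + B 0 1 1) - (B 0 0 0 + B 0 0 1))
    (H012 : B 0 1 2 = 0 + (B 0 0 1 + B 0 1 2) - (B 0 0 0 + B 0 0 1))
    (H020 : B 0 2 0 = 0 + (B 0 0 2 + B 0 2 0) - (B 0 0 0 + B 0 0 2))
    (H021 : B 0 2 1 = 0 + (B 0 0 2 + B 0 2 1) - (B 0 0 0 + B 0 0 2))
    (H022 : B 0 2 2 = 0 + (B 0 0 2 + B 0 2 2) - (B 0 0 0 + B 0 0 2))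
    (H100 : B 1 0 0 = 1 + (B 0 0 0 + B 0 0 0) - (B 0 0 1 + B 0 1 0))
    (H101 : B 1 0 1 = 1 + (B 0 0 0 + B 0 0 1) - (B 0 0 1 + B 0 1 0))
    (H102 : B 1 0 2 = 1 + (B 0 0 0 + B 0 0 2) - (B 0 0 1 + B 0 1 0))
    (H110 : B 1 1 0 = 1 + (B 0 0 1 + B 0 1 0) - (B 0 0 1 + B 0 1 1))
    (H111 : B 1 1 1 = 1 + (B 0 0 1 + B 0 1 1) - (B 0 0 1 + B 0 1 1))
    (H112 : B 1 1 2 = 1 + (B 0 0 1 + B 0 1 2) - (B 0 0 1 + B 0 1 1))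
    (H120 : B 1 2 0 = 1 + (B 0 0 2 + B 0 2 0) - (B 0 0 1 + B 0 1 2))
    (H121 : B 1 2 1 = 1 + (B 0 0 2 + B 0 2 1) - (B 0 0 1 + B 0 1 2))
    (H122 : B 1 2 2 = 1 + (B 0 0 2 + B 0 2 2) - (B 0 0 1 + B 0 1 2))
    (H200 : B 2 0 0 = 0 + (B 0 0 0 + B 0 0 0) - (B 0 0 2 + B 0 2 0))
    (H201 : B 2 0 1 = 0 + (B 0 0 0 + B 0 0 1) - (B 0 0 2 + B 0 2 0))
    (H202 : B 2 0 2 = 0 + (B 0 0 0 + B 0 0 2) - (B 0 0 2 + B 0 2 0))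
    (H210 : B 2 1 0 = 0 + (B 0 0 1 + B 0 1 0) - (B 0 0 2 + B 0 2 1))
    (H211 : B 2 1 1 = 0 + (B 0 0 1 + B 0 1 1) - (B 0 0 2 + B 0 2 1))
    (H212 : B 2 1 2 = 0 + (B 0 0 1 + B 0 1 2) - (B 0 0 2 + B 0 2 1))
    (H220 : B 2 2 0 = 0 + (B 0 0 2 + B 0 2 0) - (B 0 0 2 + B 0 2 2))
    (H221 : B 2 2 1 = 0 + (B 0 0 2 + B 0 2 1) - (B 0 0 2 + B 0 2 2))
    (H222 : B 2 2 2 = 0 + (B 0 0 2 + B 0 2 2) - (B 0 0 2 + B 0 2 2))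
    (q000 : 0 ≤ B 0 0 0 ∧ B 0 0 0 ≤ 1)
    (q001 : 0 ≤ B 0 0 1 ∧ B 0 0 1 ≤ 1)
    (q002 : 0 ≤ B 0 0 2 ∧ B 0 0 2 ≤ 1)
    (q010 : 0 ≤ B 0 1 0 ∧ B 0 1 0 ≤ 1)
    (q011 : 0 ≤ B 0 1 1 ∧ B 0 1 1 ≤ 1)
    (q012 : 0 ≤ B 0 1 2 ∧ B 0 1 2 ≤ 1)
    (q020 : 0 ≤ B 0 2 0 ∧ B 0 2 0 ≤ 1)
    (q021 : 0 ≤ B 0 2 1 ∧ B 0 2 1 ≤ 1)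
    (q022 : 0 ≤ B 0 2 2 ∧ B 0 2 2 ≤ 1)
    (q100 : 0 ≤ B 1 0 0 ∧ B 1 0 0 ≤ 1)
    (q101 : 0 ≤ B 1 0 1 ∧ B 1 0 1 ≤ 1)
    (q102 : 0 ≤ B 1 0 2 ∧ B 1 0 2 ≤ 1)
    (q110 : 0 ≤ B 1 1 0 ∧ B 1 1 0 ≤ 1)
    (q111 : 0 ≤ B 1 1 1 ∧ B 1 1 1 ≤ 1)
    (q112 : 0 ≤ B 1 1 2 ∧ B 1 1 2 ≤ 1)
    (q120 : 0 ≤ B 1 2 0 ∧ B 1 2 0 ≤ 1)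
    (q121 : 0 ≤ B 1 2 1 ∧ B 1 2 1 ≤ 1)
    (q122 : 0 ≤ B 1 2 2 ∧ B 1 2 2 ≤ 1)
    (q200 : 0 ≤ B 2 0 0 ∧ B 2 0 0 ≤ 1)
    (q201 : 0 ≤ B 2 0 1 ∧ B 2 0 1 ≤ 1)
    (q202 : 0 ≤ B 2 0 2 ∧ B 2 0 2 ≤ 1)
    (q210 : 0 ≤ B 2 1 0 ∧ B 2 1 0 ≤ 1)
    (q211 : 0 ≤ B 2 1 1 ∧ B 2 1 1 ≤ 1)
    (q212 : 0 ≤ B 2 1 2 ∧ B 2 1 2 ≤ 1)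
    (q220 : 0 ≤ B 2 2 0 ∧ B 2 2 0 ≤ 1)
    (q221 : 0 ≤ B 2 2 1 ∧ B 2 2 1 ≤ 1)
    (q222 : 0 ≤ B 2 2 2 ∧ B 2 2 2 ≤ 1)
    (hq000 : B 0 0 0 = 0)
    (hq001 : B 0 0 1 = 0)
    (hq010 : B 0 1 0 = 0)
    (hq011 : B 0 1 1 = 1)
    (hq100 : B 1 0 0 = 1)
    (hq101 : B 1 0 1 = 1)
    (hq110 : B 1 1 0 = 0)
    (hq111 : B 1 1 1 = 1)
    (hu : B 0 1 2 = 1) :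
    B 0 0 0 = 0 ∧ B 0 0 1 = 0 ∧ B 0 0 2 = 0 ∧ B 0 1 0 = 0 ∧ B 0 1 1 = 1 ∧ B 0 1 2 = 1 ∧ B 0 2 0 = 0 ∧ B 0 2 1 = 0 ∧ B 0 2 2 = 0 ∧ B 1 0 0 = 1 ∧ B 1 0 1 = 1 ∧ B 1 0 2 = 1 ∧ B 1 1 0 = 0 ∧ B 1 1 1 = 1 ∧ B 1 1 2 = 1 ∧ B 1 2 0 = 0 ∧ B 1 2 1 = 0 ∧ B 1 2 2 = 0 ∧ B 2 0 0 = 0 ∧ B 2 0 1 = 0 ∧ B 2 0 2 = 0 ∧ B 2 1 0 = 0 ∧ B 2 1 1 = 1 ∧ B 2 1 2 = 1 ∧ B 2 2 0 = 0 ∧ B 2 2 1 = 0 ∧ B 2 2 2 = 0 := by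
  have vtmp : B 1 0 2 = 1 ∧ B 0 0 2 = 0 := by clear H000 H001 H002 H010 H011 H012 H020 H021 H022 H100 H101 H110 H111 H112 H120 H121 H122 H200 H201 H202 H210 H211 H212 H220 H221 H222 q000 q001 q010 q011 q012 q020 q021 q022 q100 q101 q110 q111 q112 q120 q121 q122 q200 q201 q202 q210 q211 q212 q220 q221 q222 hq011 hq100 hq101 hq110 hq111 hu; omega
  obtain ⟨v102, v002⟩ := vtmp
  have v112 : B 1 1 2 = 1 := by clear H000 H001 H002 H010 H011 H012 H020 H021 H022 H100 H101 H102 H110 H111 H120 H121 H122 H200 H201 H202 H210 H211 H212 H220 H221 H222 q000 q001 q002 q010 q011 q012 q020 q021 q022 q100 q101 q102 q110 q111 q120 q121 q122 q200 q201 q202 q210 q211 q212 q220 q221 q222 hq000 hq010 hq100 hq101 hq110 hq111 v102 v002; omega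
  have vtmp : B 2 0 0 = 0 ∧ B 0 2 0 = 0 := by clear H000 H001 H002 H010 H011 H012 H020 H021 H022 H100 H101 H102 H110 H111 H112 H120 H121 H122 H201 H202 H210 H211 H212 H220 H221 H222 q000 q001 q002 q010 q011 q012 q021 q022 q100 q101 q102 q110 q111 q112 q120 q121 q122 q201 q202 q210 q211 q212 q220 q221 q222 hq001 hq010 hq011 hq100 hq101 hq110 hq111 hu v102 v112; omega
  obtain ⟨v200, v020⟩ := vtmp
  have v201 : B 2 0 1 = 0 := by clear H000 H001 H002 H010 H011 H012 H020 H021 H022 H100 H101 H102 H110 H111 H112 H120 H121 H122 H200 H202 H210 H211 H212 H220 H221 H222 q000 q001 q002 q010 q011 q012 q020 q021 q022 q100 q101 q102 q110 q111 q112 q120 q121 q122 q200 q202 q210 q211 q212 q220 q221 q222 hq010 hq011 hq100 hq101 hq110 hq111 hu v102 v112 v200; omega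
  have v202 : B 2 0 2 = 0 := by clear H000 H001 H002 H010 H011 H012 H020 H021 H022 H100 H101 H102 H110 H111 H112 H120 H121 H122 H200 H201 H210 H211 H212 H220 H221 H222 q000 q001 q002 q010 q011 q012 q020 q021 q022 q100 q101 q102 q110 q111 q112 q120 q121 q122 q200 q201 q210 q211 q212 q220 q221 q222 hq001 hq010 hq011 hq100 hq101 hq110 hq111 hu v102 v112 v200 v201; omega
  have vtmp : B 2 1 0 = 0 ∧ B 0 2 1 = 0 := by clear H000 H001 H002 H010 H011 H012 H020 H021 H022 H100 H101 H102 H110 H111 H112 H120 H121 H122 H200 H201 H202 H211 H212 H220 H221 H222 q000 q001 q002 q010 q011 q012 q020 q022 q100 q101 q102 q110 q111 q112 q120 q121 q122 q200 q201 q202 q211 q212 q220 q221 q222 hq000 hq011 hq100 hq101 hq110 hq111 hu v102 v112 v200 v020 v201 v202; omega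
  obtain ⟨v210, v021⟩ := vtmp
  have v211 : B 2 1 1 = 1 := by clear H000 H001 H002 H010 H011 H012 H020 H021 H022 H100 H101 H102 H110 H111 H112 H120 H121 H122 H200 H201 H202 H210 H212 H220 H221 H222 q000 q001 q002 q010 q011 q012 q020 q021 q022 q100 q101 q102 q110 q111 q112 q120 q121 q122 q200 q201 q202 q210 q212 q220 q221 q222 hq000 hq010 hq100 hq101 hq110 hq111 hu v102 v112 v200 v020 v201 v202 v210; omega
  have v212 : B 2 1 2 = 1 := by clear H000 H001 H002 H010 H011 H012 H020 H021 H022 H100 H101 H102 H110 H111 H112 H120 H121 H122 H200 H201 H202 H210 H211 H220 H221 H222 q000 q001 q002 q010 q011 q012 q020 q021 q022 q100 q101 q102 q110 q111 q112 q120 q121 q122 q200 q201 q202 q210 q211 q220 q221 q222 hq000 hq010 hq011 hq100 hq101 hq110 hq111 v102 v112 v200 v020 v201 v202 v210 v211; omega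
  have vtmp : B 2 2 0 = 0 ∧ B 0 2 2 = 0 := by clear H000 H001 H002 H010 H011 H012 H020 H021 H022 H100 H101 H102 H110 H111 H112 H120 H121 H122 H200 H201 H202 H210 H211 H212 H221 H222 q000 q001 q002 q010 q011 q012 q020 q021 q100 q101 q102 q110 q111 q112 q120 q121 q122 q200 q201 q202 q210 q211 q212 q221 q222 hq000 hq001 hq010 hq011 hq100 hq101 hq110 hq111 hu v102 v112 v200 v201 v202 v210 v021 v211 v212; omega
  obtain ⟨v220, v022⟩ := vtmp
  have v221 : B 2 2 1 = 0 := by clear H000 H001 H002 H010 H011 H012 H020 H021 H022 H100 H101 H102 H110 H111 H112 H120 H121 H122 H200 H201 H202 H210 H211 H212 H220 H222 q000 q001 q002 q010 q011 q012 q020 q021 q022 q100 q101 q102 q110 q111 q112 q120 q121 q122 q200 q201 q202 q210 q211 q212 q220 q222 hq000 hq001 hq010 hq011 hq100 hq101 hq110 hq111 hu v102 v112 v200 v020 v201 v202 v210 v211 v212 v220; omega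
  have v222 : B 2 2 2 = 0 := by clear H000 H001 H002 H010 H011 H012 H020 H021 H022 H100 H101 H102 H110 H111 H112 H120 H121 H122 H200 H201 H202 H210 H211 H212 H220 H221 q000 q001 q002 q010 q011 q012 q020 q021 q022 q100 q101 q102 q110 q111 q112 q120 q121 q122 q200 q201 q202 q210 q211 q212 q220 q221 hq000 hq001 hq010 hq011 hq100 hq101 hq110 hq111 hu v102 v112 v200 v020 v201 v202 v210 v021 v211 v212 v220 v221; omega
  have v120 : B 1 2 0 = 0 := by clear H000 H001 H002 H010 H011 H012 H020 H021 H022 H100 H101 H102 H110 H111 H112 H121 H122 H200 H201 H202 H210 H211 H212 H220 H221 H222 q000 q001 q002 q010 q011 q012 q020 q021 q022 q100 q101 q102 q110 q111 q112 q121 q122 q200 q201 q202 q210 q211 q212 q220 q221 q222 hq000 hq010 hq011 hq100 hq101 hq110 hq111 v102 v112 v200 v201 v202 v210 v021 v211 v212 v220 v022 v221 v222; omega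
  have v121 : B 1 2 1 = 0 := by clear H000 H001 H002 H010 H011 H012 H020 H021 H022 H100 H101 H102 H110 H111 H112 H120 H122 H200 H201 H202 H210 H211 H212 H220 H221 H222 q000 q001 q002 q010 q011 q012 q020 q021 q022 q100 q101 q102 q110 q111 q112 q120 q122 q200 q201 q202 q210 q211 q212 q220 q221 q222 hq000 hq010 hq011 hq100 hq101 hq110 hq111 v102 v112 v200 v020 v201 v202 v210 v211 v212 v220 v022 v221 v222 v120; omega
  have v122 : B 1 2 2 = 0 := by clear H000 H001 H002 H010 H011 H012 H020 H021 H022 H100 H101 H102 H110 H111 H112 H120 H121 H200 H201 H202 H210 H211 H212 H220 H221 H222 q000 q001 q002 q010 q011 q012 q020 q021 q022 q100 q101 q102 q110 q111 q112 q120 q121 q200 q201 q202 q210 q211 q212 q220 q221 q222 hq000 hq010 hq011 hq100 hq101 hq110 hq111 v102 v112 v200 v020 v201 v202 v210 v021 v211 v212 v220 v221 v222 v120 v121; omega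
  exact ⟨hq000, hq001, v002, hq010, hq011, hu, v020, v021, v022, hq100, hq101, v102, hq110, hq111, v112, v120, v121, v122, v200, v201, v202, v210, v211, v212, v220, v221, v222⟩

lemma patOf (T : Fin 3 → Fin 3 → Fin 3 → Bool) (f : Rule3)
    (hval : ∀ a b c : Fin 3, Ψ1 (f a b c) = (if T a b c = true then 1 else 0)) :
    patP T f := fun a b c => iff_of_psi _ _ (hval a b c)

lemma main_fwd (f : Rule3) (h : conserves3 f Ψ1) (hc : compat184 f) :
    patP T1tab f ∨ patP T2tab f := by
  have hp0 : Ψ1 0 = 0 := by decide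
  have hp1 : Ψ1 1 = 1 := by decide
  have hp2 : Ψ1 2 = 0 := by decide
  have hHT : ∀ a b c : Fin 3, Ψ1 (f a b c)
      = Ψ1 a + (Ψ1 (f 0 0 b) + Ψ1 (f 0 b c)) - (Ψ1 (f 0 0 a) + Ψ1 (f 0 a b)) := by
    intro a b c
    have s1 := Seq5 f h a b c
    have s2 := Seq5 f h b c 0
    have s3 := Seq5 f h 0 0 0
    omega
  obtain ⟨B, hB⟩ : ∃ B : Fin 3 → Fin 3 → Fin 3 → ℤ, ∀ a b c, B a b c = Ψ1 (f a b c) :=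
    ⟨_, fun _ _ _ => rfl⟩
  have hpsi01 : ∀ v : Fin 3, 0 ≤ Ψ1 v ∧ Ψ1 v ≤ 1 := by decide
  have he011 : f 0 1 1 = 1 := (hc 0 1 1).1 (by decide)
  have hq011 : B 0 1 1 = 1 := by rw [hB, he011]; decide
  have he100 : f 1 0 0 = 1 := (hc 1 0 0).1 (by decide)
  have hq100 : B 1 0 0 = 1 := by rw [hB, he100]; decide
  have he101 : f 1 0 1 = 1 := (hc 1 0 1).1 (by decide)
  have hq101 : B 1 0 1 = 1 := by rw [hB, he101]; decide
  have he111 : f 1 1 1 = 1 := (hc 1 1 1).1 (by decide)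
  have hq111 : B 1 1 1 = 1 := by rw [hB, he111]; decide
  have he000 : f 0 0 0 = 0 ∨ f 0 0 0 = 2 := (hc 0 0 0).2 (by decide)
  have hq000 : B 0 0 0 = 0 := by
    rw [hB]; rcases he000 with h' | h' <;> rw [h'] <;> decide
  have he001 : f 0 0 1 = 0 ∨ f 0 0 1 = 2 := (hc 0 0 1).2 (by decide)
  have hq001 : B 0 0 1 = 0 := by
    rw [hB]; rcases he001 with h' | h' <;> rw [h'] <;> decide
  have he010 : f 0 1 0 = 0 ∨ f 0 1 0 = 2 := (hc 0 1 0).2 (by decide)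
  have hq010 : B 0 1 0 = 0 := by
    rw [hB]; rcases he010 with h' | h' <;> rw [h'] <;> decide
  have he110 : f 1 1 0 = 0 ∨ f 1 1 0 = 2 := (hc 1 1 0).2 (by decide)
  have hq110 : B 1 1 0 = 0 := by
    rw [hB]; rcases he110 with h' | h' <;> rw [h'] <;> decide
  have H000 : B 0 0 0 = Ψ1 0 + (B 0 0 0 + B 0 0 0) - (B 0 0 0 + B 0 0 0) := by
    rw [hB 0 0 0]; exact hHT 0 0 0
  have q000 : 0 ≤ B 0 0 0 ∧ B 0 0 0 ≤ 1 := by rw [hB]; exact hpsi01 _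
  have H001 : B 0 0 1 = Ψ1 0 + (B 0 0 0 + B 0 0 1) - (B 0 0 0 + B 0 0 0) := by
    rw [hB 0 0 1, hB 0 0 0]; exact hHT 0 0 1
  have q001 : 0 ≤ B 0 0 1 ∧ B 0 0 1 ≤ 1 := by rw [hB]; exact hpsi01 _
  have H002 : B 0 0 2 = Ψ1 0 + (B 0 0 0 + B 0 0 2) - (B 0 0 0 + B 0 0 0) := by
    rw [hB 0 0 2, hB 0 0 0]; exact hHT 0 0 2
  have q002 : 0 ≤ B 0 0 2 ∧ B 0 0 2 ≤ 1 := by rw [hB]; exact hpsi01 _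
  have H010 : B 0 1 0 = Ψ1 0 + (B 0 0 1 + B 0 1 0) - (B 0 0 0 + B 0 0 1) := by
    rw [hB 0 1 0, hB 0 0 1, hB 0 0 0]; exact hHT 0 1 0
  have q010 : 0 ≤ B 0 1 0 ∧ B 0 1 0 ≤ 1 := by rw [hB]; exact hpsi01 _
  have H011 : B 0 1 1 = Ψ1 0 + (B 0 0 1 + B 0 1 1) - (B 0 0 0 + B 0 0 1) := by
    rw [hB 0 1 1, hB 0 0 1, hB 0 0 0]; exact hHT 0 1 1
  have q011 : 0 ≤ B 0 1 1 ∧ B 0 1 1 ≤ 1 := by rw [hB]; exact hpsi01 _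
  have H012 : B 0 1 2 = Ψ1 0 + (B 0 0 1 + B 0 1 2) - (B 0 0 0 + B 0 0 1) := by
    rw [hB 0 1 2, hB 0 0 1, hB 0 0 0]; exact hHT 0 1 2
  have q012 : 0 ≤ B 0 1 2 ∧ B 0 1 2 ≤ 1 := by rw [hB]; exact hpsi01 _
  have H020 : B 0 2 0 = Ψ1 0 + (B 0 0 2 + B 0 2 0) - (B 0 0 0 + B 0 0 2) := by
    rw [hB 0 2 0, hB 0 0 2, hB 0 0 0]; exact hHT 0 2 0
  have q020 : 0 ≤ B 0 2 0 ∧ B 0 2 0 ≤ 1 := by rw [hB]; exact hpsi01 _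
  have H021 : B 0 2 1 = Ψ1 0 + (B 0 0 2 + B 0 2 1) - (B 0 0 0 + B 0 0 2) := by
    rw [hB 0 2 1, hB 0 0 2, hB 0 0 0]; exact hHT 0 2 1
  have q021 : 0 ≤ B 0 2 1 ∧ B 0 2 1 ≤ 1 := by rw [hB]; exact hpsi01 _
  have H022 : B 0 2 2 = Ψ1 0 + (B 0 0 2 + B 0 2 2) - (B 0 0 0 + B 0 0 2) := by
    rw [hB 0 2 2, hB 0 0 2, hB 0 0 0]; exact hHT 0 2 2
  have q022 : 0 ≤ B 0 2 2 ∧ B 0 2 2 ≤ 1 := by rw [hB]; exact hpsi01 _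
  have H100 : B 1 0 0 = Ψ1 1 + (B 0 0 0 + B 0 0 0) - (B 0 0 1 + B 0 1 0) := by
    rw [hB 1 0 0, hB 0 0 0, hB 0 0 1, hB 0 1 0]; exact hHT 1 0 0
  have q100 : 0 ≤ B 1 0 0 ∧ B 1 0 0 ≤ 1 := by rw [hB]; exact hpsi01 _
  have H101 : B 1 0 1 = Ψ1 1 + (B 0 0 0 + B 0 0 1) - (B 0 0 1 + B 0 1 0) := by
    rw [hB 1 0 1, hB 0 0 0, hB 0 0 1, hB 0 1 0]; exact hHT 1 0 1
  have q101 : 0 ≤ B 1 0 1 ∧ B 1 0 1 ≤ 1 := by rw [hB]; exact hpsi01 _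
  have H102 : B 1 0 2 = Ψ1 1 + (B 0 0 0 + B 0 0 2) - (B 0 0 1 + B 0 1 0) := by
    rw [hB 1 0 2, hB 0 0 0, hB 0 0 2, hB 0 0 1, hB 0 1 0]; exact hHT 1 0 2
  have q102 : 0 ≤ B 1 0 2 ∧ B 1 0 2 ≤ 1 := by rw [hB]; exact hpsi01 _
  have H110 : B 1 1 0 = Ψ1 1 + (B 0 0 1 + B 0 1 0) - (B 0 0 1 + B 0 1 1) := by
    rw [hB 1 1 0, hB 0 0 1, hB 0 1 0, hB 0 1 1]; exact hHT 1 1 0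
  have q110 : 0 ≤ B 1 1 0 ∧ B 1 1 0 ≤ 1 := by rw [hB]; exact hpsi01 _
  have H111 : B 1 1 1 = Ψ1 1 + (B 0 0 1 + B 0 1 1) - (B 0 0 1 + B 0 1 1) := by
    rw [hB 1 1 1, hB 0 0 1, hB 0 1 1]; exact hHT 1 1 1
  have q111 : 0 ≤ B 1 1 1 ∧ B 1 1 1 ≤ 1 := by rw [hB]; exact hpsi01 _
  have H112 : B 1 1 2 = Ψ1 1 + (B 0 0 1 + B 0 1 2) - (B 0 0 1 + B 0 1 1) := by
    rw [hB 1 1 2, hB 0 0 1, hB 0 1 2, hB 0 1 1]; exact hHT 1 1 2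
  have q112 : 0 ≤ B 1 1 2 ∧ B 1 1 2 ≤ 1 := by rw [hB]; exact hpsi01 _
  have H120 : B 1 2 0 = Ψ1 1 + (B 0 0 2 + B 0 2 0) - (B 0 0 1 + B 0 1 2) := by
    rw [hB 1 2 0, hB 0 0 2, hB 0 2 0, hB 0 0 1, hB 0 1 2]; exact hHT 1 2 0
  have q120 : 0 ≤ B 1 2 0 ∧ B 1 2 0 ≤ 1 := by rw [hB]; exact hpsi01 _
  have H121 : B 1 2 1 = Ψ1 1 + (B 0 0 2 + B 0 2 1) - (B 0 0 1 + B 0 1 2) := by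
    rw [hB 1 2 1, hB 0 0 2, hB 0 2 1, hB 0 0 1, hB 0 1 2]; exact hHT 1 2 1
  have q121 : 0 ≤ B 1 2 1 ∧ B 1 2 1 ≤ 1 := by rw [hB]; exact hpsi01 _
  have H122 : B 1 2 2 = Ψ1 1 + (B 0 0 2 + B 0 2 2) - (B 0 0 1 + B 0 1 2) := by
    rw [hB 1 2 2, hB 0 0 2, hB 0 2 2, hB 0 0 1, hB 0 1 2]; exact hHT 1 2 2
  have q122 : 0 ≤ B 1 2 2 ∧ B 1 2 2 ≤ 1 := by rw [hB]; exact hpsi01 _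
  have H200 : B 2 0 0 = Ψ1 2 + (B 0 0 0 + B 0 0 0) - (B 0 0 2 + B 0 2 0) := by
    rw [hB 2 0 0, hB 0 0 0, hB 0 0 2, hB 0 2 0]; exact hHT 2 0 0
  have q200 : 0 ≤ B 2 0 0 ∧ B 2 0 0 ≤ 1 := by rw [hB]; exact hpsi01 _
  have H201 : B 2 0 1 = Ψ1 2 + (B 0 0 0 + B 0 0 1) - (B 0 0 2 + B 0 2 0) := by
    rw [hB 2 0 1, hB 0 0 0, hB 0 0 1, hB 0 0 2, hB 0 2 0]; exact hHT 2 0 1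
  have q201 : 0 ≤ B 2 0 1 ∧ B 2 0 1 ≤ 1 := by rw [hB]; exact hpsi01 _
  have H202 : B 2 0 2 = Ψ1 2 + (B 0 0 0 + B 0 0 2) - (B 0 0 2 + B 0 2 0) := by
    rw [hB 2 0 2, hB 0 0 0, hB 0 0 2, hB 0 2 0]; exact hHT 2 0 2
  have q202 : 0 ≤ B 2 0 2 ∧ B 2 0 2 ≤ 1 := by rw [hB]; exact hpsi01 _
  have H210 : B 2 1 0 = Ψ1 2 + (B 0 0 1 + B 0 1 0) - (B 0 0 2 + B 0 2 1) := by
    rw [hB 2 1 0, hB 0 0 1, hB 0 1 0, hB 0 0 2, hB 0 2 1]; exact hHT 2 1 0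
  have q210 : 0 ≤ B 2 1 0 ∧ B 2 1 0 ≤ 1 := by rw [hB]; exact hpsi01 _
  have H211 : B 2 1 1 = Ψ1 2 + (B 0 0 1 + B 0 1 1) - (B 0 0 2 + B 0 2 1) := by
    rw [hB 2 1 1, hB 0 0 1, hB 0 1 1, hB 0 0 2, hB 0 2 1]; exact hHT 2 1 1
  have q211 : 0 ≤ B 2 1 1 ∧ B 2 1 1 ≤ 1 := by rw [hB]; exact hpsi01 _
  have H212 : B 2 1 2 = Ψ1 2 + (B 0 0 1 + B 0 1 2) - (B 0 0 2 + B 0 2 1) := by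
    rw [hB 2 1 2, hB 0 0 1, hB 0 1 2, hB 0 0 2, hB 0 2 1]; exact hHT 2 1 2
  have q212 : 0 ≤ B 2 1 2 ∧ B 2 1 2 ≤ 1 := by rw [hB]; exact hpsi01 _
  have H220 : B 2 2 0 = Ψ1 2 + (B 0 0 2 + B 0 2 0) - (B 0 0 2 + B 0 2 2) := by
    rw [hB 2 2 0, hB 0 0 2, hB 0 2 0, hB 0 2 2]; exact hHT 2 2 0
  have q220 : 0 ≤ B 2 2 0 ∧ B 2 2 0 ≤ 1 := by rw [hB]; exact hpsi01 _
  have H221 : B 2 2 1 = Ψ1 2 + (B 0 0 2 + B 0 2 1) - (B 0 0 2 + B 0 2 2) := by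
    rw [hB 2 2 1, hB 0 0 2, hB 0 2 1, hB 0 2 2]; exact hHT 2 2 1
  have q221 : 0 ≤ B 2 2 1 ∧ B 2 2 1 ≤ 1 := by rw [hB]; exact hpsi01 _
  have H222 : B 2 2 2 = Ψ1 2 + (B 0 0 2 + B 0 2 2) - (B 0 0 2 + B 0 2 2) := by
    rw [hB 2 2 2, hB 0 0 2, hB 0 2 2]; exact hHT 2 2 2
  have q222 : 0 ≤ B 2 2 2 ∧ B 2 2 2 ≤ 1 := by rw [hB]; exact hpsi01 _
  rw [hp0] at H000 H001 H002 H010 H011 H012 H020 H021 H022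
  rw [hp1] at H100 H101 H102 H110 H111 H112 H120 H121 H122
  rw [hp2] at H200 H201 H202 H210 H211 H212 H220 H221 H222
  have hcase : B 0 1 2 = 0 ∨ B 0 1 2 = 1 := by have := q012; omega
  rcases hcase with hu | hu
  · left
    obtain ⟨v000, v001, v002, v010, v011, v012, v020, v021, v022, v100, v101, v102, v110, v111, v112, v120, v121, v122, v200, v201, v202, v210, v211, v212, v220, v221, v222⟩ := pin1 B H000 H001 H002 H010 H011 H012 H020 H021 H022 H100 H101 H102 H110 H111 H112 H120 H121 H122 H200 H201 H202 H210 H211 H212 H220 H221 H222 q000 q001 q002 q010 q011 q012 q020 q021 q022 q100 q101 q102 q110 q111 q112 q120 q121 q122 q200 q201 q202 q210 q211 q212 q220 q221 q222 hq000 hq001 hq010 hq011 hq100 hq101 hq110 hq111 hu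
    refine patOf T1tab f ?_
    intro a b c
    fin_cases a <;> fin_cases b <;> fin_cases c
    · exact hB 0 0 0 ▸ v000
    · exact hB 0 0 1 ▸ v001
    · exact hB 0 0 2 ▸ v002
    · exact hB 0 1 0 ▸ v010
    · exact hB 0 1 1 ▸ v011
    · exact hB 0 1 2 ▸ v012
    · exact hB 0 2 0 ▸ v020
    · exact hB 0 2 1 ▸ v021
    · exact hB 0 2 2 ▸ v022
    · exact hB 1 0 0 ▸ v100
    · exact hB 1 0 1 ▸ v101
    · exact hB 1 0 2 ▸ v102
    · exact hB 1 1 0 ▸ v110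
    · exact hB 1 1 1 ▸ v111
    · exact hB 1 1 2 ▸ v112
    · exact hB 1 2 0 ▸ v120
    · exact hB 1 2 1 ▸ v121
    · exact hB 1 2 2 ▸ v122
    · exact hB 2 0 0 ▸ v200
    · exact hB 2 0 1 ▸ v201
    · exact hB 2 0 2 ▸ v202
    · exact hB 2 1 0 ▸ v210
    · exact hB 2 1 1 ▸ v211
    · exact hB 2 1 2 ▸ v212
    · exact hB 2 2 0 ▸ v220
    · exact hB 2 2 1 ▸ v221
    · exact hB 2 2 2 ▸ v222
  · right
    obtain ⟨v000, v001, v002, v010, v011, v012, v020, v021, v022, v100, v101, v102, v110, v111, v112, v120, v121, v122, v200, v201, v202, v210, v211, v212, v220, v221, v222⟩ := pin2 B H000 H001 H002 H010 H011 H012 H020 H021 H022 H100 H101 H102 H110 H111 H112 H120 H121 H122 H200 H201 H202 H210 H211 H212 H220 H221 H222 q000 q001 q002 q010 q011 q012 q020 q021 q022 q100 q101 q102 q110 q111 q112 q120 q121 q122 q200 q201 q202 q210 q211 q212 q220 q221 q222 hq000 hq001 hq010 hq011 hq100 hq101 hq110 hq111 hu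
    refine patOf T2tab f ?_
    intro a b c
    fin_cases a <;> fin_cases b <;> fin_cases c
    · exact hB 0 0 0 ▸ v000
    · exact hB 0 0 1 ▸ v001
    · exact hB 0 0 2 ▸ v002
    · exact hB 0 1 0 ▸ v010
    · exact hB 0 1 1 ▸ v011
    · exact hB 0 1 2 ▸ v012
    · exact hB 0 2 0 ▸ v020
    · exact hB 0 2 1 ▸ v021
    · exact hB 0 2 2 ▸ v022
    · exact hB 1 0 0 ▸ v100
    · exact hB 1 0 1 ▸ v101
    · exact hB 1 0 2 ▸ v102
    · exact hB 1 1 0 ▸ v110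
    · exact hB 1 1 1 ▸ v111
    · exact hB 1 1 2 ▸ v112
    · exact hB 1 2 0 ▸ v120
    · exact hB 1 2 1 ▸ v121
    · exact hB 1 2 2 ▸ v122
    · exact hB 2 0 0 ▸ v200
    · exact hB 2 0 1 ▸ v201
    · exact hB 2 0 2 ▸ v202
    · exact hB 2 1 0 ▸ v210
    · exact hB 2 1 1 ▸ v211
    · exact hB 2 1 2 ▸ v212
    · exact hB 2 2 0 ▸ v220
    · exact hB 2 2 1 ▸ v221
    · exact hB 2 2 2 ▸ v222

/-- curried subtype ≃ pointwise Pi of subtypes -/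
def countEquiv (T : Fin 3 → Fin 3 → Fin 3 → Bool) :
    {f : Rule3 // patP T f} ≃
      (∀ p : Fin 3 × Fin 3 × Fin 3, {v : Fin 3 // v = 1 ↔ T p.1 p.2.1 p.2.2 = true}) where
  toFun f := fun p => ⟨f.1 p.1 p.2.1 p.2.2, f.2 p.1 p.2.1 p.2.2⟩
  invFun g := ⟨fun a b c => (g (a, b, c)).1, fun a b c => (g (a, b, c)).2⟩
  left_inv _ := rfl
  right_inv _ := rfl

lemma hdisj : Disjoint (patP T1tab) (patP T2tab) := by
  rw [disjoint_iff_inf_le]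
  intro f hf
  exact absurd ((hf.2 1 2 0).mp ((hf.1 1 2 0).mpr (by decide))) (by decide)
/-- There are exactly `2^19` ternary rules conserving the number of 1's that are
compatible with elementary rule 184. -/
theorem count_ones_conserving_compat184 :
    Nat.card {f : Rule3 // conserves3 f Ψ1 ∧ compat184 f} = 2 ^ 19 := by
  have main : ∀ f : Rule3, (conserves3 f Ψ1 ∧ compat184 f) ↔ (patP T1tab f ∨ patP T2tab f) :=
    fun f => ⟨fun ⟨h, hc⟩ => main_fwd f h hc, fun h => h.elim (back1 f) (back2 f)⟩
  rw [Nat.card_congr (Equiv.subtypeEquivRight main)]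
  rw [Nat.card_congr (subtypeOrEquiv _ _ hdisj)]
  rw [Nat.card_sum]
  rw [Nat.card_congr (countEquiv T1tab), Nat.card_congr (countEquiv T2tab)]
  rw [Nat.card_eq_fintype_card, Nat.card_eq_fintype_card]
  rw [Fintype.card_pi, Fintype.card_pi]
  decide
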